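/- Let G be a finite simple graph with vertex set [n] = {1,...,n}. Then the total number of increasing spanning forests of G is at most the number of acyclic orientations of G, with equality if and only if the natural ordering 1,2,...,n is a perfect elimination ordering of G. -/

import Mathlib

open Classical

/-- A simple graph on a linearly ordered vertex type is an *increasing forest*. -/
def IsIncreasingForest {V : Type*} [LinearOrder V] (F : SimpleGraph V) : Prop :=
  F.IsAcyclic ∧ ∀ (r v : V), (∀ w, F.Reachable r w → r ≤ w) →
    ∀ p : F.Walk r v, p.IsPath → p.support.Chain' (· < ·)

/-- `F` is an increasing spanning forest of `G`. -/
def IsISF {n : ℕ} (G : SimpleGraph (Fin n)) (F : Finset (Sym2 (Fin n))) : Prop :=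
  (F : Set (Sym2 (Fin n))) ⊆ G.edgeSet ∧
    IsIncreasingForest (SimpleGraph.fromEdgeSet (F : Set (Sym2 (Fin n))))

/-- The total number of increasing spanning forests of `G`. -/
noncomputable def isfTotal {n : ℕ} (G : SimpleGraph (Fin n)) : ℕ :=
  ((Finset.univ : Finset (Finset (Sym2 (Fin n)))).filter (fun F => IsISF G F)).card

/-- `r` is an acyclic orientation of `G`: each edge of `G` receives exactly one
direction, no non-edge is directed, and there is no directed cycle. -/
def IsAcyclicOrientation {n : ℕ} (G : SimpleGraph (Fin n)) (r : Fin n → Fin n → Bool) : Prop :=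
  (∀ u v, r u v = true → G.Adj u v) ∧
  (∀ u v, G.Adj u v → (r u v = true ↔ ¬ r v u = true)) ∧
  (∀ v, ¬ Relation.TransGen (fun a b => r a b = true) v v)

/-- The number of acyclic orientations of `G`. -/
noncomputable def ao {n : ℕ} (G : SimpleGraph (Fin n)) : ℕ :=
  ((Finset.univ : Finset (Fin n → Fin n → Bool)).filter
    (fun r => IsAcyclicOrientation G r)).card

/-- The natural ordering `1, 2, …, n` is a perfect elimination ordering of `G`. -/
def IsPEO {n : ℕ} (G : SimpleGraph (Fin n)) : Prop :=
  ∀ i j k : Fin n, i < j → j < k → G.Adj i k → G.Adj j k → G.Adj i j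

namespace ISFP
variable {n : ℕ}

noncomputable def sm (F : Finset (Sym2 (Fin n))) (i : Fin n) : Finset (Fin n) :=
  Finset.univ.filter (fun j => j < i ∧ s(j, i) ∈ F)

lemma mem_sm {F : Finset (Sym2 (Fin n))} {i j : Fin n} :
    j ∈ sm F i ↔ j < i ∧ s(j, i) ∈ F := by simp [sm]

lemma le_getLast_of_chain' {l : List (Fin n)} (hl : l.Chain' (· < ·)) {x : Fin n}
    (hx : x ∈ l) (hne : l ≠ []) : x ≤ l.getLast hne := by
  have hp : l.Pairwise (· < ·) := List.isChain_iff_pairwise.mp hl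
  rw [← List.dropLast_append_getLast hne] at hx hp
  rcases List.mem_append.mp hx with h | h
  · exact le_of_lt ((List.pairwise_append.mp hp).2.2 x h _ (by simp))
  · simp at h; simp [h]

section Chain
variable {F : Finset (Sym2 (Fin n))} {H : SimpleGraph (Fin n)}
  (hH : ∀ a b, H.Adj a b ↔ s(a, b) ∈ F ∧ a ≠ b)
  (hsm : ∀ i, (sm F i).card ≤ 1)

include hH hsm in
lemma chain_of_sm : ∀ {a b : Fin n} (p : H.Walk a b), p.IsPath →
    (∀ u, H.Adj u a → u < a → u ∉ p.support) → p.support.Chain' (· < ·) := by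
  intro a b p
  induction p with
  | nil => intro _ _; exact List.isChain_singleton _
  | @cons a c b h q ih =>
    intro hp hmin
    have hac : a < c := by
      rcases lt_trichotomy a c with h1 | h1 | h1
      · exact h1
      · exact absurd h1 h.ne
      · exact absurd (by simp [SimpleGraph.Walk.support_cons]) (hmin c h.symm h1)
    have hq : q.support.Chain' (· < ·) := by
      refine ih hp.of_cons ?_
      intro u hu hlt hmem
      have hua : u = a := by
        have h1 : u ∈ sm F c := mem_sm.mpr ⟨hlt, ((hH u c).mp hu).1⟩
        have h2 : a ∈ sm F c := mem_sm.mpr ⟨hac, ((hH a c).mp h).1⟩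
        exact Finset.card_le_one.mp (hsm c) _ h1 _ h2
      subst hua
      exact ((SimpleGraph.Walk.cons_isPath_iff h q).mp hp).2 hmem
    rw [SimpleGraph.Walk.support_cons, q.support_eq_cons]
    rw [q.support_eq_cons] at hq
    exact List.isChain_cons_cons.mpr ⟨hac, hq⟩

include hH hsm in
lemma acyclic_of_sm : H.IsAcyclic := by
  intro v c hc
  -- m0 : minimum of support
  have hns : c.support.toFinset.Nonempty := ⟨v, by simp⟩
  set m0 := c.support.toFinset.min' hns with hm0
  have hm0mem : m0 ∈ c.support := by
    have := c.support.toFinset.min'_mem hns; simpa using this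
  have hm0min : ∀ x ∈ c.support, m0 ≤ x := fun x hx =>
    c.support.toFinset.min'_le x (by simpa using hx)
  set c' := c.rotate m0 hm0mem with hc'def
  have hc' : c'.IsCycle := hc.rotate hm0mem
  have hsupp : ∀ x ∈ c'.support, m0 ≤ x := by
    intro x hx
    rw [c'.support_eq_cons] at hx
    rcases List.mem_cons.mp hx with rfl | hx
    · exact le_refl _
    · exact hm0min x (List.mem_of_mem_tail
        ((SimpleGraph.Walk.support_rotate c m0 hm0mem).mem_iff.mp hx))
  -- decompose c' = cons h q
  obtain ⟨a, h, q, hceq⟩ := SimpleGraph.Walk.not_nil_iff.mp hc'.not_nil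
  rw [hceq] at hc' hsupp
  have hqpath : q.IsPath := ((SimpleGraph.Walk.cons_isCycle_iff q h).mp hc').1
  have ham0 : a ≠ m0 := fun he => H.irrefl (he ▸ h)
  obtain ⟨w, h2, q3, hqeq⟩ := SimpleGraph.Walk.exists_eq_cons_of_ne ham0 q
  subst hqeq
  set q : H.Walk a m0 := SimpleGraph.Walk.cons h2 q3 with hqeq
  have hch : q.reverse.support.Chain' (· < ·) := by
    refine chain_of_sm hH hsm _ hqpath.reverse ?_
    intro u hu hlt hmem
    have : m0 ≤ u := by
      refine hsupp u ?_
      rw [SimpleGraph.Walk.support_cons]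
      right
      rw [SimpleGraph.Walk.support_reverse] at hmem
      exact List.mem_reverse.mp hmem
    exact absurd hlt (not_lt.mpr this)
  rw [SimpleGraph.Walk.support_reverse] at hch
  have hle : ∀ x ∈ q.support, x ≤ a := by
    intro x hx
    have hne : q.support.reverse ≠ [] := by simp [q.support_ne_nil]
    have := le_getLast_of_chain' hch (List.mem_reverse.mpr hx) hne
    rw [List.getLast_reverse] at this
    simpa only [hqeq, SimpleGraph.Walk.support_cons, List.head_cons] using this
  -- w and m0 are two distinct smaller neighbors of a
  have hwmem : w ∈ q.support := by
    rw [hqeq, SimpleGraph.Walk.support_cons]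
    exact List.mem_cons_of_mem _ q3.start_mem_support
  have hwa : w < a := lt_of_le_of_ne (hle w hwmem) (fun he => H.irrefl (he ▸ h2))
  have hm0a : m0 < a := lt_of_le_of_ne (hle m0 q.end_mem_support) (Ne.symm ham0)
  have hwm0 : w ≠ m0 := by
    rintro rfl
    have hnil : q3 = SimpleGraph.Walk.nil := by
      rw [← SimpleGraph.Walk.isPath_iff_eq_nil]
      exact hqpath.of_cons
    have h3 := hc'.three_le_length
    simp only [hqeq, hnil, SimpleGraph.Walk.length_cons, SimpleGraph.Walk.length_nil] at h3
    omega
  have hw : w ∈ sm F a := mem_sm.mpr ⟨hwa, by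
    have := ((hH a w).mp h2).1; rwa [Sym2.eq_swap] at this⟩
  have hm : m0 ∈ sm F a := mem_sm.mpr ⟨hm0a, ((hH m0 a).mp h).1⟩
  exact hwm0 (Finset.card_le_one.mp (hsm a) _ hw _ hm)

end Chain

lemma walk_getLast? {V : Type*} {H : SimpleGraph V} {u v : V} (p : H.Walk u v) :
    p.support.getLast? = some v := by
  induction p with
  | nil => simp
  | @cons u c v h q ih =>
    rw [SimpleGraph.Walk.support_cons, List.getLast?_cons, ih]
    simp

lemma walk_getLast {V : Type*} {H : SimpleGraph V} {u v : V} (p : H.Walk u v) (h) :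
    p.support.getLast h = v := by
  have := walk_getLast? p
  rwa [List.getLast?_eq_getLast h, Option.some_inj] at this

lemma isPath_concat {V : Type*} {H : SimpleGraph V} {w : V} :
    ∀ {u v} (p : H.Walk u v) (h : H.Adj v w), p.IsPath → w ∉ p.support → (p.concat h).IsPath := by
  intro u v p
  induction p with
  | nil =>
    intro h _ hw
    rw [SimpleGraph.Walk.concat_nil]
    refine (SimpleGraph.Walk.cons_isPath_iff _ _).mpr ⟨SimpleGraph.Walk.IsPath.nil, ?_⟩
    simpa using fun he => hw (by simp [he])
  | @cons a c b hadj q ih =>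
    intro h hp hw
    rw [SimpleGraph.Walk.concat_cons, SimpleGraph.Walk.cons_isPath_iff]
    constructor
    · exact ih h hp.of_cons (fun hm => hw (by
        rw [SimpleGraph.Walk.support_cons]; exact List.mem_cons_of_mem _ hm))
    · rw [SimpleGraph.Walk.support_concat]
      intro hmem
      rcases List.mem_append.mp hmem with hm | hm
      · exact ((SimpleGraph.Walk.cons_isPath_iff hadj q).mp hp).2 hm
      · have hwa : a = w := by simpa using hm
        exact hw (by rw [← hwa]; exact (SimpleGraph.Walk.cons hadj q).start_mem_support)

section ISFchar
variable {F : Finset (Sym2 (Fin n))} {H : SimpleGraph (Fin n)}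
  (hH : ∀ a b, H.Adj a b ↔ s(a, b) ∈ F ∧ a ≠ b)

include hH in
lemma sm_of_if (hIF : IsIncreasingForest H) : ∀ i, (sm F i).card ≤ 1 := by
  intro i
  rw [Finset.card_le_one]
  intro a ha b hb
  rw [mem_sm] at ha hb
  have hadj : ∀ x, x < i → s(x, i) ∈ F → H.Adj x i := fun x hx he =>
    (hH x i).mpr ⟨he, ne_of_lt hx⟩
  have haI := hadj a ha.1 ha.2
  have hbI := hadj b hb.1 hb.2
  -- the root of the component of i
  have hns : (Finset.univ.filter (fun w => H.Reachable i w)).Nonempty :=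
    ⟨i, by simp [SimpleGraph.Reachable.refl]⟩
  set r := (Finset.univ.filter (fun w => H.Reachable i w)).min' hns with hrdef
  have hri : H.Reachable i r := by
    have := (Finset.univ.filter (fun w => H.Reachable i w)).min'_mem hns
    simpa using this
  have hr : ∀ w, H.Reachable r w → r ≤ w := by
    intro w hw
    exact Finset.min'_le _ _ (by simp [hri.trans hw])
  -- for x a smaller neighbor of i, build a path from r to i whose last edge is x-i
  have key : ∀ x, x < i → H.Adj x i → ∃ (q : H.Walk r i), q.IsPath ∧
      q.edges.getLast? = some s(x, i) := by
    intro x hx hxI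
    have hreach : H.Reachable r x := (hri.symm).trans ⟨SimpleGraph.Walk.cons hxI.symm .nil⟩
    obtain ⟨wk⟩ := hreach
    set p := wk.toPath with hpdef
    have hchain : p.1.support.Chain' (· < ·) := hIF.2 r x hr p.1 p.2
    have hiNot : i ∉ p.1.support := by
      intro hmem
      have hle := le_getLast_of_chain' hchain hmem p.1.support_ne_nil
      rw [walk_getLast] at hle
      exact absurd hx (not_lt.mpr hle)
    refine ⟨p.1.concat hxI, isPath_concat p.1 hxI p.2 hiNot, ?_⟩
    rw [SimpleGraph.Walk.edges_concat]
    simp [List.concat_eq_append]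
  obtain ⟨qa, hqa, hea⟩ := key a ha.1 haI
  obtain ⟨qb, hqb, heb⟩ := key b hb.1 hbI
  have huniq := SimpleGraph.isAcyclic_iff_path_unique.mp hIF.1 ⟨qa, hqa⟩ ⟨qb, hqb⟩
  have : qa = qb := congrArg Subtype.val huniq
  rw [this, heb] at hea
  have h2 := Option.some_injective _ hea
  exact (Sym2.congr_left.mp h2).symm

end ISFchar

lemma isf_iff {G : SimpleGraph (Fin n)} {F : Finset (Sym2 (Fin n))} :
    IsISF G F ↔ (F : Set (Sym2 (Fin n))) ⊆ G.edgeSet ∧ ∀ i, (sm F i).card ≤ 1 := by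
  have hadjiff : (F : Set (Sym2 (Fin n))) ⊆ G.edgeSet → ∀ a b,
      (SimpleGraph.fromEdgeSet (F : Set (Sym2 (Fin n)))).Adj a b ↔ s(a, b) ∈ F ∧ a ≠ b := by
    intro _ a b; rw [SimpleGraph.fromEdgeSet_adj]; simp
  constructor
  · rintro ⟨hsub, hIF⟩
    exact ⟨hsub, sm_of_if (hadjiff hsub) hIF⟩
  · rintro ⟨hsub, hsm⟩
    refine ⟨hsub, acyclic_of_sm (hadjiff hsub) hsm, ?_⟩
    intro r v hr p hp
    refine chain_of_sm (hadjiff hsub) hsm p hp ?_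
    intro u hu hlt _
    exact absurd hlt (not_lt.mpr (hr u hu.symm.reachable))

section Count
variable (G : SimpleGraph (Fin n))

noncomputable def Pprod : ℕ :=
  ∏ i : Fin n, (1 + (Finset.univ.filter (fun j => j < i ∧ G.Adj j i)).card)

noncomputable def Psi (f : ∀ i : Fin n, Option {j : Fin n // j < i ∧ G.Adj j i}) :
    Finset (Sym2 (Fin n)) :=
  Finset.univ.biUnion (fun i => (f i).elim ∅ (fun j => {s(j.1, i)}))

lemma mem_Psi {f : ∀ i : Fin n, Option {j : Fin n // j < i ∧ G.Adj j i}} {e : Sym2 (Fin n)} :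
    e ∈ Psi G f ↔ ∃ (i : Fin n), ∃ (j : {j : Fin n // j < i ∧ G.Adj j i}), f i = some j ∧ e = s(j.1, i) := by
  simp only [Psi, Finset.mem_biUnion, Finset.mem_univ, true_and]
  constructor
  · rintro ⟨i, hi⟩
    cases hfi : f i with
    | none => rw [hfi] at hi; simp at hi
    | some j =>
      rw [hfi] at hi; simp only [Option.elim, Finset.mem_singleton] at hi
      exact ⟨i, j, hfi, hi⟩
  · rintro ⟨i, j, hj, rfl⟩; exact ⟨i, by rw [hj]; simp⟩

lemma smaller_mem_Psi {f : ∀ i : Fin n, Option {j : Fin n // j < i ∧ G.Adj j i}}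
    {i a : Fin n} (ha : a < i) :
    s(a, i) ∈ Psi G f ↔ ∃ (h : a < i ∧ G.Adj a i), f i = some ⟨a, h⟩ := by
  constructor
  · intro h
    obtain ⟨i', j', hj', heq⟩ := (mem_Psi G).mp h
    rcases Sym2.eq_iff.mp heq with ⟨h1, h2⟩ | ⟨h1, h2⟩
    · subst h2; refine ⟨by rw [h1]; exact j'.2, ?_⟩
      rw [hj']; congr 1; exact Subtype.ext h1.symm
    · exfalso; subst h1; subst h2; exact absurd j'.2.1 (not_lt.mpr (le_of_lt ha))
  · rintro ⟨h, hf⟩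
    exact (mem_Psi G).mpr ⟨i, ⟨a, h⟩, hf, rfl⟩

noncomputable def Phi (F : Finset (Sym2 (Fin n))) (i : Fin n) :
    Option {j : Fin n // j < i ∧ G.Adj j i} :=
  if h : ∃ j : {j : Fin n // j < i ∧ G.Adj j i}, s(j.1, i) ∈ F then some h.choose else none

lemma Phi_def (F : Finset (Sym2 (Fin n))) (i : Fin n) :
    Phi G F i =
      if h : ∃ j : {j : Fin n // j < i ∧ G.Adj j i}, s(j.1, i) ∈ F then some h.choose else none :=
  rfl

theorem isfTotal_eq_Pprod : isfTotal G = Pprod G := by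
  classical
  have hcardT : Fintype.card (∀ i : Fin n, Option {j : Fin n // j < i ∧ G.Adj j i}) = Pprod G := by
    rw [Fintype.card_pi]
    refine Finset.prod_congr rfl (fun i _ => ?_)
    rw [Fintype.card_option, Fintype.card_subtype]
    omega
  rw [isfTotal, ← hcardT, ← Finset.card_univ]
  refine Finset.card_bij' (fun F _ => Phi G F) (fun f _ => Psi G f) ?_ ?_ ?_ ?_
  · intro F _; exact Finset.mem_univ _
  · -- Psi f is an ISF
    intro f _
    rw [Finset.mem_filter]
    refine ⟨Finset.mem_univ _, isf_iff.mpr ⟨?_, ?_⟩⟩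
    · intro e he
      obtain ⟨i, j, _, rfl⟩ := (mem_Psi G).mp (Finset.mem_coe.mp he)
      exact (G.mem_edgeSet).mpr j.2.2
    · intro i
      rw [Finset.card_le_one]
      intro a ha b hb
      rw [mem_sm] at ha hb
      obtain ⟨h1, hf1⟩ := (smaller_mem_Psi G ha.1).mp ha.2
      obtain ⟨h2, hf2⟩ := (smaller_mem_Psi G hb.1).mp hb.2
      rw [hf1] at hf2
      simpa using congrArg Subtype.val (Option.some_injective _ hf2)
  · -- Phi ∘ Psi = id
    intro F hF
    rw [Finset.mem_filter] at hF
    obtain ⟨hsub, hsm⟩ := isf_iff.mp hF.2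
    ext e
    constructor
    · intro he
      obtain ⟨i, j, hj, rfl⟩ := (mem_Psi G).mp he
      simp only [Phi_def] at hj
      split at hj
      · next hex =>
        have hc := hex.choose_spec
        rwa [Option.some_inj.mp hj] at hc
      · exact absurd hj (by simp)
    · intro he
      induction e with
      | _ a b =>
        have hadj : G.Adj a b := (G.mem_edgeSet).mp (hsub he)
        -- wlog a < b
        rcases lt_trichotomy a b with hab | hab | hab
        · have hex : ∃ j : {j : Fin n // j < b ∧ G.Adj j b}, s(j.1, b) ∈ F :=
            ⟨⟨a, hab, hadj⟩, he⟩
          have hc := hex.choose_spec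
          have hca : hex.choose.1 = a := by
            refine Finset.card_le_one.mp (hsm b) _ ?_ _ (mem_sm.mpr ⟨hab, he⟩)
            exact mem_sm.mpr ⟨hex.choose.2.1, hc⟩
          refine (mem_Psi G).mpr ⟨b, hex.choose, ?_, by rw [hca]⟩
          simp only [Phi_def]; simp [hex]
        · exact absurd hab hadj.ne
        · have he' : s(b, a) ∈ F := by rwa [Sym2.eq_swap] at he
          have hex : ∃ j : {j : Fin n // j < a ∧ G.Adj j a}, s(j.1, a) ∈ F :=
            ⟨⟨b, hab, hadj.symm⟩, he'⟩
          have hc := hex.choose_spec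
          have hcb : hex.choose.1 = b := by
            refine Finset.card_le_one.mp (hsm a) _ ?_ _ (mem_sm.mpr ⟨hab, he'⟩)
            exact mem_sm.mpr ⟨hex.choose.2.1, hc⟩
          refine (mem_Psi G).mpr ⟨a, hex.choose, ?_, by rw [hcb, Sym2.eq_swap]⟩
          simp only [Phi_def]; simp [hex]
  · -- Psi ∘ Phi = id
    intro f _
    funext i
    cases hfi : f i with
    | none =>
      simp only [Phi_def]
      split
      · next hex =>
        exfalso
        have hc := hex.choose_spec
        obtain ⟨h, hf⟩ := (smaller_mem_Psi G hex.choose.2.1).mp hc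
        rw [hfi] at hf; exact absurd hf (by simp)
      · rfl
    | some j =>
      simp only [Phi_def]
      have hex : ∃ j' : {j' : Fin n // j' < i ∧ G.Adj j' i}, s(j'.1, i) ∈ Psi G f :=
        ⟨j, (smaller_mem_Psi G j.2.1).mpr ⟨j.2, by rw [hfi]⟩⟩
      rw [dif_pos hex]
      have hc := hex.choose_spec
      obtain ⟨h, hf⟩ := (smaller_mem_Psi G hex.choose.2.1).mp hc
      rw [hfi] at hf
      exact (Option.some_inj.mpr (Option.some_injective _ hf).symm)

end Count

section PartB
variable {m : ℕ}

/-- restriction of a graph on `Fin (m+1)` to `Fin m` -/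
def Gres (G : SimpleGraph (Fin (m+1))) : SimpleGraph (Fin m) := G.comap Fin.castSucc

lemma gres_adj (G : SimpleGraph (Fin (m+1))) (a b : Fin m) :
    (Gres G).Adj a b ↔ G.Adj a.castSucc b.castSucc := Iff.rfl

lemma lt_last_of_adj {G : SimpleGraph (Fin (m+1))} {j : Fin (m+1)}
    (h : G.Adj j (Fin.last m)) : j < Fin.last m :=
  lt_of_le_of_ne (Fin.le_last j) h.ne

/-- the clique condition at the last vertex -/
def Cl (G : SimpleGraph (Fin (m+1))) : Prop :=
  ∀ a b : Fin (m+1), a < b → G.Adj a (Fin.last m) → G.Adj b (Fin.last m) → G.Adj a b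

lemma peo_iff (G : SimpleGraph (Fin (m+1))) :
    IsPEO G ↔ Cl G ∧ IsPEO (Gres G) := by
  constructor
  · intro h
    constructor
    · intro a b hab ha hb
      exact h a b (Fin.last m) hab (lt_last_of_adj hb) ha hb
    · intro i j k hij hjk hik hjk'
      exact h _ _ _ (Fin.castSucc_lt_castSucc_iff.mpr hij)
        (Fin.castSucc_lt_castSucc_iff.mpr hjk) hik hjk'
  · rintro ⟨hcl, hpeo⟩
    intro i j k hij hjk hik hjk'
    rcases eq_or_ne k (Fin.last m) with rfl | hk
    · exact hcl i j hij hik hjk'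
    · have hkl : k < Fin.last m := lt_of_le_of_ne (Fin.le_last k) hk
      have hi : i ≠ Fin.last m := ne_of_lt (hij.trans (hjk.trans hkl))
      have hj : j ≠ Fin.last m := ne_of_lt (hjk.trans hkl)
      have hlt1 : i.castPred hi < j.castPred hj := by
        simp only [Fin.lt_def, Fin.coe_castPred]; exact hij
      have hlt2 : j.castPred hj < k.castPred hk := by
        simp only [Fin.lt_def, Fin.coe_castPred]; exact hjk
      have := hpeo (i.castPred hi) (j.castPred hj) (k.castPred hk) hlt1 hlt2
        (by rw [gres_adj, Fin.castSucc_castPred, Fin.castSucc_castPred]; exact hik)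
        (by rw [gres_adj, Fin.castSucc_castPred, Fin.castSucc_castPred]; exact hjk')
      rw [gres_adj, Fin.castSucc_castPred, Fin.castSucc_castPred] at this
      exact this

/-- the neighbours of the last vertex -/
noncomputable def NL (G : SimpleGraph (Fin (m+1))) : Finset (Fin (m+1)) :=
  Finset.univ.filter (fun u => G.Adj u (Fin.last m))

lemma pprod_split (G : SimpleGraph (Fin (m+1))) :
    Pprod G = (1 + (NL G).card) * Pprod (Gres G) := by
  have h1 : ∀ i : Fin m,
      (Finset.univ.filter (fun j => j < i.castSucc ∧ G.Adj j i.castSucc)).card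
      = (Finset.univ.filter (fun j => j < i ∧ (Gres G).Adj j i)).card := by
    intro i
    refine Finset.card_bij (fun j hj => j.castPred (by
      rw [Finset.mem_filter] at hj
      exact ne_of_lt (hj.2.1.trans (Fin.castSucc_lt_last i)))) ?_ ?_ ?_
    · intro j hj
      rw [Finset.mem_filter] at hj ⊢
      refine ⟨Finset.mem_univ _, ?_, ?_⟩
      · simp only [Fin.lt_def, Fin.coe_castPred]
        simpa [Fin.lt_def] using hj.2.1
      · rw [gres_adj, Fin.castSucc_castPred]; exact hj.2.2
    · intro a ha b hb hab
      have := congrArg Fin.castSucc hab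
      rwa [Fin.castSucc_castPred, Fin.castSucc_castPred] at this
    · intro b hb
      rw [Finset.mem_filter] at hb
      refine ⟨b.castSucc, ?_, ?_⟩
      · rw [Finset.mem_filter]
        exact ⟨Finset.mem_univ _, Fin.castSucc_lt_castSucc_iff.mpr hb.2.1, hb.2.2⟩
      · simp [Fin.castPred_castSucc]
  have h2 : (Finset.univ.filter (fun j => j < Fin.last m ∧ G.Adj j (Fin.last m))) = NL G := by
    refine Finset.filter_congr (fun j _ => ?_)
    constructor
    · rintro ⟨_, h⟩; exact h
    · intro h; exact ⟨lt_last_of_adj h, h⟩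
  simp only [Pprod, Fin.prod_univ_castSucc, h2]
  rw [mul_comm]
  congr 1
  exact Finset.prod_congr rfl (fun i _ => by rw [h1])

end PartB

section Ext
variable {m : ℕ}

def Rlift (r' : Fin m → Fin m → Bool) (a b : Fin (m+1)) : Prop :=
  ∃ (ha : a ≠ Fin.last m) (hb : b ≠ Fin.last m), r' (a.castPred ha) (b.castPred hb) = true

noncomputable def DD (G : SimpleGraph (Fin (m+1))) (r' : Fin m → Fin m → Bool)
    (u : Fin (m+1)) : Finset (Fin (m+1)) :=
  (NL G).filter (fun w => Relation.ReflTransGen (Rlift r') w u)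

def Good (G : SimpleGraph (Fin (m+1))) (r' : Fin m → Fin m → Bool)
    (S : Finset (Fin (m+1))) : Prop :=
  ∀ y x, G.Adj y (Fin.last m) → x ∈ S → Relation.ReflTransGen (Rlift r') y x → y ∈ S

noncomputable def extO (G : SimpleGraph (Fin (m+1))) (r' : Fin m → Fin m → Bool)
    (S : Finset (Fin (m+1))) : Fin (m+1) → Fin (m+1) → Bool :=
  fun u v =>
    if hu : u = Fin.last m then decide (G.Adj u v ∧ v ∉ S)
    else if hv : v = Fin.last m then decide (G.Adj u v ∧ u ∈ S)
    else r' (u.castPred hu) (v.castPred hv)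

variable (G : SimpleGraph (Fin (m+1))) (r' : Fin m → Fin m → Bool) (S : Finset (Fin (m+1)))

lemma extO_restrict (a b : Fin m) : extO G r' S a.castSucc b.castSucc = r' a b := by
  rw [extO]
  rw [dif_neg (Fin.castSucc_lt_last a).ne, dif_neg (Fin.castSucc_lt_last b).ne]
  simp [Fin.castPred_castSucc]

lemma extO_in {u : Fin (m+1)} (hu : u ≠ Fin.last m) :
    (extO G r' S u (Fin.last m) = true ↔ G.Adj u (Fin.last m) ∧ u ∈ S) := by
  rw [extO, dif_neg hu, dif_pos rfl]
  simp

lemma extO_out {v : Fin (m+1)} (hv : v ≠ Fin.last m) :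
    (extO G r' S (Fin.last m) v = true ↔ G.Adj (Fin.last m) v ∧ v ∉ S) := by
  rw [extO, dif_pos rfl]
  simp

lemma extO_mid {u v : Fin (m+1)} (hu : u ≠ Fin.last m) (hv : v ≠ Fin.last m) :
    (extO G r' S u v = true ↔ Rlift r' u v) := by
  rw [extO, dif_neg hu, dif_neg hv]
  constructor
  · exact fun h => ⟨hu, hv, h⟩
  · rintro ⟨_, _, h⟩; exact h

/-- case analysis for a single step of the extended orientation -/
lemma extO_step {a b : Fin (m+1)} (h : extO G r' S a b = true) :
    (a = Fin.last m ∧ b ≠ Fin.last m ∧ G.Adj (Fin.last m) b ∧ b ∉ S) ∨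
    (a ≠ Fin.last m ∧ b = Fin.last m ∧ G.Adj a (Fin.last m) ∧ a ∈ S) ∨
    (a ≠ Fin.last m ∧ b ≠ Fin.last m ∧ Rlift r' a b) := by
  rcases eq_or_ne a (Fin.last m) with rfl | ha
  · rw [extO, dif_pos rfl] at h
    rw [decide_eq_true_iff] at h
    exact Or.inl ⟨rfl, h.1.ne', h.1, h.2⟩
  · rcases eq_or_ne b (Fin.last m) with rfl | hb
    · rw [extO_in G r' S ha] at h
      exact Or.inr (Or.inl ⟨ha, rfl, h.1, h.2⟩)
    · exact Or.inr (Or.inr ⟨ha, hb, (extO_mid G r' S ha hb).mp h⟩)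

lemma rlift_cast {a b : Fin (m+1)} (h : Relation.TransGen (Rlift r') a b) :
    ∃ (ha : a ≠ Fin.last m) (hb : b ≠ Fin.last m),
      Relation.TransGen (fun x y => r' x y = true) (a.castPred ha) (b.castPred hb) := by
  induction h with
  | single h =>
    obtain ⟨ha, hb, h⟩ := h
    exact ⟨ha, hb, Relation.TransGen.single h⟩
  | tail h1 h2 ih =>
    obtain ⟨ha, hb, ih⟩ := ih
    obtain ⟨hb', hc, h2⟩ := h2
    exact ⟨ha, hc, ih.tail h2⟩

lemma rlift_acyclic (hr' : ∀ v, ¬ Relation.TransGen (fun a b => r' a b = true) v v) :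
    ∀ v, ¬ Relation.TransGen (Rlift r') v v := by
  intro v h
  obtain ⟨ha, hb, h⟩ := rlift_cast r' h
  exact hr' _ h

lemma extO_acyclic (hr' : ∀ v, ¬ Relation.TransGen (fun a b => r' a b = true) v v)
    (hgood : Good G r' S) :
    ∀ v, ¬ Relation.TransGen (fun a b => extO G r' S a b = true) v v := by
  set L := Fin.last m with hL
  have key : ∀ a b, Relation.TransGen (fun a b => extO G r' S a b = true) a b →
      (a ≠ L ∧ b ≠ L ∧ Relation.TransGen (Rlift r') a b) ∨
      (a = L ∧ b ≠ L ∧ ∃ y, G.Adj L y ∧ y ∉ S ∧ Relation.ReflTransGen (Rlift r') y b) ∨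
      (a ≠ L ∧ b = L ∧ ∃ x ∈ S, Relation.ReflTransGen (Rlift r') a x) ∨
      (a ≠ L ∧ b ≠ L ∧ (∃ x ∈ S, Relation.ReflTransGen (Rlift r') a x) ∧
        ∃ y, G.Adj L y ∧ y ∉ S ∧ Relation.ReflTransGen (Rlift r') y b) := by
    intro a b h
    induction h with
    | single h =>
      rcases extO_step G r' S h with ⟨rfl, hb, hadj, hbS⟩ | ⟨ha, rfl, hadj, haS⟩ | ⟨ha, hb, hr⟩
      · exact Or.inr (Or.inl ⟨rfl, hb, _, hadj, hbS, Relation.ReflTransGen.refl⟩)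
      · exact Or.inr (Or.inr (Or.inl ⟨ha, rfl, a, haS, Relation.ReflTransGen.refl⟩))
      · exact Or.inl ⟨ha, hb, Relation.TransGen.single hr⟩
    | @tail b c h1 h2 ih =>
      rcases extO_step G r' S h2 with ⟨rfl, hc, hadj, hcS⟩ | ⟨hb, rfl, hadj, hbS⟩ | ⟨hb, hc, hr⟩
      · -- step out of L : previous part must end at L
        rcases ih with ⟨_, hb, _⟩ | ⟨_, hb, _⟩ | ⟨ha, _, x, hxS, hrt⟩ | ⟨_, hb, _⟩
        · exact absurd rfl hb
        · exact absurd rfl hb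
        · exact Or.inr (Or.inr (Or.inr ⟨ha, hc, ⟨x, hxS, hrt⟩, c, hadj, hcS,
            Relation.ReflTransGen.refl⟩))
        · exact absurd rfl hb
      · -- step into L
        rcases ih with ⟨ha, hb', htg⟩ | ⟨ha, hb', y, hy, hyS, hrt⟩ | ⟨_, hb', _⟩ | ⟨ha, hb', hax, y, hy, hyS, hrt⟩
        · exact Or.inr (Or.inr (Or.inl ⟨ha, rfl, b, hbS, htg.to_reflTransGen⟩))
        · exact absurd (hgood y b hy.symm hbS hrt) hyS
        · exact (hb hb').elim
        · exact absurd (hgood y b hy.symm hbS hrt) hyS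
      · -- ordinary step
        rcases ih with ⟨ha, hb', htg⟩ | ⟨ha, hb', y, hy, hyS, hrt⟩ | ⟨_, hb', _⟩ | ⟨ha, hb', hax, y, hy, hyS, hrt⟩
        · exact Or.inl ⟨ha, hc, htg.tail hr⟩
        · exact Or.inr (Or.inl ⟨ha, hc, y, hy, hyS, hrt.tail hr⟩)
        · exact (hb hb').elim
        · exact Or.inr (Or.inr (Or.inr ⟨ha, hc, hax, y, hy, hyS, hrt.tail hr⟩))
  intro v hv
  rcases key v v hv with ⟨_, _, htg⟩ | ⟨rfl, hb, _⟩ | ⟨ha, rfl, _⟩ | ⟨_, _, ⟨x, hxS, hax⟩, y, hy, hyS, hrt⟩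
  · exact rlift_acyclic r' hr' v htg
  · exact absurd rfl hb
  · exact absurd rfl ha
  · exact hyS (hgood y x hy.symm hxS (hrt.trans hax))

lemma extO_isAO (hAO' : IsAcyclicOrientation (Gres G) r') (hS : S ⊆ NL G)
    (hgood : Good G r' S) : IsAcyclicOrientation G (extO G r' S) := by
  obtain ⟨h1, h2, h3⟩ := hAO'
  refine ⟨?_, ?_, extO_acyclic G r' S h3 hgood⟩
  · intro u v h
    rcases extO_step G r' S h with ⟨rfl, _, hadj, _⟩ | ⟨_, rfl, hadj, _⟩ | ⟨hu, hv, hr⟩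
    · exact hadj
    · exact hadj
    · obtain ⟨_, _, hr⟩ := hr
      have := h1 _ _ hr
      rwa [gres_adj, Fin.castSucc_castPred, Fin.castSucc_castPred] at this
  · intro u v hadj
    rcases eq_or_ne u (Fin.last m) with rfl | hu
    · have hv : v ≠ Fin.last m := hadj.ne'
      rw [extO_out G r' S hv, extO_in G r' S hv]
      constructor
      · rintro ⟨_, hvS⟩ ⟨_, hvS'⟩; exact hvS hvS'
      · intro h
        refine ⟨hadj, fun hvS => h ⟨hadj.symm, hvS⟩⟩
    · rcases eq_or_ne v (Fin.last m) with rfl | hv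
      · rw [extO_out G r' S hu, extO_in G r' S hu]
        constructor
        · rintro ⟨_, huS⟩ ⟨_, huS'⟩; exact huS' huS
        · intro h
          refine ⟨hadj, ?_⟩
          by_contra huS
          exact h ⟨hadj.symm, huS⟩
      · rw [extO_mid G r' S hu hv, extO_mid G r' S hv hu]
        have hadj' : (Gres G).Adj (u.castPred hu) (v.castPred hv) := by
          rw [gres_adj, Fin.castSucc_castPred, Fin.castSucc_castPred]; exact hadj
        have := h2 _ _ hadj'
        constructor
        · rintro ⟨_, _, hr⟩ ⟨_, _, hr'⟩
          exact (this.mp hr) hr'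
        · intro h
          refine ⟨hu, hv, this.mpr (fun hr' => h ⟨hv, hu, hr'⟩)⟩

end Ext

section CountAO
variable {m : ℕ} (G : SimpleGraph (Fin (m+1)))

noncomputable def Sop (r' : Fin m → Fin m → Bool) (o : Option (Fin (m+1))) :
    Finset (Fin (m+1)) :=
  o.elim ∅ (DD G r')

noncomputable def OptsL : Finset (Option (Fin (m+1))) :=
  insert none ((NL G).image some)

lemma card_OptsL : (OptsL G).card = 1 + (NL G).card := by
  rw [OptsL, Finset.card_insert_of_notMem (by simp), Finset.card_image_of_injective _
    (Option.some_injective _)]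
  omega

lemma mem_OptsL {o : Option (Fin (m+1))} :
    o ∈ OptsL G ↔ o = none ∨ ∃ u ∈ NL G, o = some u := by
  simp [OptsL, eq_comm]

lemma Sop_subset (r' : Fin m → Fin m → Bool) (o : Option (Fin (m+1))) :
    Sop G r' o ⊆ NL G := by
  cases o with
  | none => simp [Sop]
  | some u => simpa [Sop, DD] using Finset.filter_subset _ _

lemma good_Sop (r' : Fin m → Fin m → Bool) (o : Option (Fin (m+1))) :
    Good G r' (Sop G r' o) := by
  cases o with
  | none => intro y x _ hx _; simp [Sop] at hx
  | some u =>
    intro y x hy hx hyx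
    simp only [Sop, Option.elim, DD, Finset.mem_filter, NL, Finset.mem_univ, true_and] at hx ⊢
    exact ⟨hy, hyx.trans hx.2⟩

noncomputable def pm (p : (Fin m → Fin m → Bool) × Option (Fin (m+1))) :
    Fin (m+1) → Fin (m+1) → Bool :=
  extO G p.1 (Sop G p.1 p.2)

noncomputable def aoFil (k : ℕ) (H : SimpleGraph (Fin k)) :
    Finset (Fin k → Fin k → Bool) :=
  Finset.univ.filter (fun r => IsAcyclicOrientation H r)

lemma pm_maps {r' : Fin m → Fin m → Bool} {o : Option (Fin (m+1))}
    (hr' : IsAcyclicOrientation (Gres G) r') :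
    IsAcyclicOrientation G (pm G (r', o)) :=
  extO_isAO G r' _ hr' (Sop_subset G r' o) (good_Sop G r' o)

lemma pm_inj {r1 r2 : Fin m → Fin m → Bool} {o1 o2 : Option (Fin (m+1))}
    (hr1 : IsAcyclicOrientation (Gres G) r1) (ho1 : o1 ∈ OptsL G) (ho2 : o2 ∈ OptsL G)
    (heq : pm G (r1, o1) = pm G (r2, o2)) : r1 = r2 ∧ o1 = o2 := by
  have hr12 : r1 = r2 := by
    funext a b
    have := congrFun (congrFun heq a.castSucc) b.castSucc
    rwa [pm, pm, extO_restrict, extO_restrict] at this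
  subst hr12
  refine ⟨rfl, ?_⟩
  have hSeq : Sop G r1 o1 = Sop G r1 o2 := by
    ext u
    constructor
    · intro hu
      have huN : u ∈ NL G := Sop_subset G r1 o1 hu
      have huL : u ≠ Fin.last m := by
        rw [NL, Finset.mem_filter] at huN; exact huN.2.ne
      have h1 : extO G r1 (Sop G r1 o1) u (Fin.last m) = true := by
        rw [extO_in G r1 _ huL]
        exact ⟨(Finset.mem_filter.mp huN).2, hu⟩
      rw [show extO G r1 (Sop G r1 o1) = extO G r1 (Sop G r1 o2) from heq] at h1
      exact ((extO_in G r1 _ huL).mp h1).2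
    · intro hu
      have huN : u ∈ NL G := Sop_subset G r1 o2 hu
      have huL : u ≠ Fin.last m := (Finset.mem_filter.mp huN).2.ne
      have h1 : extO G r1 (Sop G r1 o2) u (Fin.last m) = true := by
        rw [extO_in G r1 _ huL]
        exact ⟨(Finset.mem_filter.mp huN).2, hu⟩
      rw [show extO G r1 (Sop G r1 o2) = extO G r1 (Sop G r1 o1) from heq.symm] at h1
      exact ((extO_in G r1 _ huL).mp h1).2
  have hirr : ∀ v, ¬ Relation.TransGen (Rlift r1) v v := rlift_acyclic r1 hr1.2.2
  rcases (mem_OptsL G).mp ho1 with rfl | ⟨u, huN, rfl⟩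
  · rcases (mem_OptsL G).mp ho2 with rfl | ⟨v, hvN, rfl⟩
    · rfl
    · exfalso
      have : v ∈ Sop G r1 (some v) := by
        simp [Sop, DD, Finset.mem_filter, hvN, Relation.ReflTransGen.refl]
      rw [← hSeq] at this
      simp [Sop] at this
  · rcases (mem_OptsL G).mp ho2 with rfl | ⟨v, hvN, rfl⟩
    · exfalso
      have : u ∈ Sop G r1 (some u) := by
        simp [Sop, DD, Finset.mem_filter, huN, Relation.ReflTransGen.refl]
      rw [hSeq] at this
      simp [Sop] at this
    · have huv : Relation.ReflTransGen (Rlift r1) u v := by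
        have : u ∈ Sop G r1 (some v) := by
          rw [← hSeq]
          simp [Sop, DD, Finset.mem_filter, huN, Relation.ReflTransGen.refl]
        exact (by simpa [Sop, DD, Finset.mem_filter] using this : _ ∧ _).2
      have hvu : Relation.ReflTransGen (Rlift r1) v u := by
        have : v ∈ Sop G r1 (some u) := by
          rw [hSeq]
          simp [Sop, DD, Finset.mem_filter, hvN, Relation.ReflTransGen.refl]
        exact (by simpa [Sop, DD, Finset.mem_filter] using this : _ ∧ _).2
      rcases Relation.reflTransGen_iff_eq_or_transGen.mp huv with rfl | htg
      · rfl
      · exact ((hirr u) (htg.trans_left hvu)).elim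

end CountAO

section Surj
variable {m : ℕ} (G : SimpleGraph (Fin (m+1)))

lemma restrict_isAO {r : Fin (m+1) → Fin (m+1) → Bool} (h : IsAcyclicOrientation G r) :
    IsAcyclicOrientation (Gres G) (fun a b => r a.castSucc b.castSucc) := by
  obtain ⟨h1, h2, h3⟩ := h
  refine ⟨?_, ?_, ?_⟩
  · intro u v hr
    exact h1 _ _ hr
  · intro u v hadj
    exact h2 _ _ hadj
  · intro v htg
    refine h3 v.castSucc ?_
    exact Relation.TransGen.lift Fin.castSucc (fun a b h => h) _ _ htg

lemma exists_max_rel {α : Type*} (R : α → α → Prop) (htr : Transitive R)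
    (hirr : ∀ a, ¬ R a a) : ∀ (S : Finset α), S.Nonempty → ∃ u ∈ S, ∀ b ∈ S, ¬ R u b := by
  classical
  intro S
  induction S using Finset.strongInduction with
  | _ S ih =>
    intro hS
    obtain ⟨x, hx⟩ := hS
    rcases (S.filter (fun y => R x y)).eq_empty_or_nonempty with hTe | hTne
    · refine ⟨x, hx, fun b hb hR => ?_⟩
      have hbT : b ∈ S.filter (fun y => R x y) := Finset.mem_filter.mpr ⟨hb, hR⟩
      simp [hTe] at hbT
    · have hssub : S.filter (fun y => R x y) ⊂ S := by
        refine (Finset.ssubset_iff_of_subset (Finset.filter_subset _ _)).mpr ⟨x, hx, ?_⟩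
        simp [hirr x]
      obtain ⟨u, huT, hmax⟩ := ih _ hssub hTne
      have hxu : R x u := (Finset.mem_filter.mp huT).2
      refine ⟨u, (Finset.mem_filter.mp huT).1, fun b hb hR => ?_⟩
      exact hmax b (Finset.mem_filter.mpr ⟨hb, htr hxu hR⟩) hR

lemma pm_surj (hcl : Cl G) {r : Fin (m+1) → Fin (m+1) → Bool}
    (hAO : IsAcyclicOrientation G r) :
    ∃ r' o, IsAcyclicOrientation (Gres G) r' ∧ o ∈ OptsL G ∧ pm G (r', o) = r := by
  set L := Fin.last m with hLdef
  obtain ⟨h1, h2, h3⟩ := hAO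
  set r' : Fin m → Fin m → Bool := fun a b => r a.castSucc b.castSucc with hr'def
  have hr' : IsAcyclicOrientation (Gres G) r' := restrict_isAO G ⟨h1, h2, h3⟩
  set S : Finset (Fin (m+1)) := (NL G).filter (fun u => r u L = true) with hSdef
  have hrlift : ∀ a b, Rlift r' a b ↔ (a ≠ L ∧ b ≠ L ∧ r a b = true) := by
    intro a b
    constructor
    · rintro ⟨ha, hb, h⟩
      refine ⟨ha, hb, ?_⟩
      simp only [hr'def] at h
      rwa [Fin.castSucc_castPred, Fin.castSucc_castPred] at h
    · rintro ⟨ha, hb, h⟩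
      refine ⟨ha, hb, ?_⟩
      simp only [hr'def]
      rw [Fin.castSucc_castPred, Fin.castSucc_castPred]
      exact h
  have hrL : ∀ u v : Fin (m+1), ¬ G.Adj u v → r u v = false := by
    intro u v h
    cases hr : r u v
    · rfl
    · exact absurd (h1 u v hr) h
  have hmemS : ∀ u, u ∈ S ↔ G.Adj u L ∧ r u L = true := by
    intro u
    rw [hSdef, Finset.mem_filter, NL, Finset.mem_filter]
    simp only [Finset.mem_univ, true_and]
    exact Iff.rfl
  have hext : extO G r' S = r := by
    funext u v
    rcases eq_or_ne u L with rfl | hu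
    · rcases eq_or_ne v L with rfl | hv
      · rw [extO, dif_pos rfl, hrL L L (G.irrefl)]
        simp [G.irrefl]
      · rw [Bool.eq_iff_iff, extO_out G r' S hv]
        by_cases hadj : G.Adj L v
        · constructor
          · rintro ⟨_, hvS⟩
            have hvL : ¬ r v L = true := fun hvt => hvS ((hmemS v).mpr ⟨hadj.symm, hvt⟩)
            exact (h2 L v hadj).mpr hvL
          · intro hrv
            refine ⟨hadj, fun hvS => ?_⟩
            exact ((h2 v L hadj.symm).mp ((hmemS v).mp hvS).2) hrv
        · rw [hrL L v hadj]
          simp [show ¬ G.Adj (Fin.last m) v from hadj]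
    · rcases eq_or_ne v L with rfl | hv
      · rw [Bool.eq_iff_iff, extO_in G r' S hu]
        by_cases hadj : G.Adj u L
        · constructor
          · rintro ⟨_, huS⟩
            exact ((hmemS u).mp huS).2
          · intro hrt
            exact ⟨hadj, (hmemS u).mpr ⟨hadj, hrt⟩⟩
        · rw [hrL u L hadj]
          simp [show ¬ G.Adj u (Fin.last m) from hadj]
      · rw [Bool.eq_iff_iff, extO_mid G r' S hu hv, hrlift]
        constructor
        · rintro ⟨_, _, h⟩; exact h
        · intro h; exact ⟨hu, hv, h⟩
  rcases S.eq_empty_or_nonempty with hSe | hSne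
  · refine ⟨r', none, hr', (mem_OptsL G).mpr (Or.inl rfl), ?_⟩
    rw [pm]
    simp only [Sop, Option.elim]
    rw [← hSe, hext]
  · obtain ⟨u, huS, hmax⟩ := exists_max_rel (Relation.TransGen (Rlift r'))
      (fun _ _ _ hab hbc => hab.trans hbc) (rlift_acyclic r' hr'.2.2) S hSne
    have huN : u ∈ NL G := by
      rw [NL, Finset.mem_filter]
      exact ⟨Finset.mem_univ _, ((hmemS u).mp huS).1⟩
    have hSD : S = DD G r' u := by
      ext w
      constructor
      · intro hwS
        have hwadj : G.Adj w L := ((hmemS w).mp hwS).1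
        refine Finset.mem_filter.mpr ⟨by
          rw [NL, Finset.mem_filter]; exact ⟨Finset.mem_univ _, hwadj⟩, ?_⟩
        rcases eq_or_ne w u with rfl | hwu
        · exact Relation.ReflTransGen.refl
        · have huadj : G.Adj u L := ((hmemS u).mp huS).1
          have hadj : G.Adj w u := by
            rcases lt_trichotomy w u with hlt | heq | hlt
            · exact hcl w u hlt hwadj huadj
            · exact absurd heq hwu
            · exact (hcl u w hlt huadj hwadj).symm
          have hwL : w ≠ L := hwadj.ne
          have huL : u ≠ L := huadj.ne
          cases hru : r w u with
          | false =>
            have hruw : r u w = true := by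
              by_contra hne
              have hwu' : r w u = true := (h2 w u hadj).mpr (by simpa using hne)
              rw [hru] at hwu'
              exact Bool.noConfusion hwu'
            exact ((hmax w hwS)
              (Relation.TransGen.single ((hrlift u w).mpr ⟨huL, hwL, hruw⟩))).elim
          | true =>
            exact Relation.ReflTransGen.single ((hrlift w u).mpr ⟨hwL, huL, hru⟩)
      · intro hwD
        obtain ⟨hwN, hrt⟩ := Finset.mem_filter.mp hwD
        by_contra hwS
        have hadjwL : G.Adj w L := by
          rw [NL, Finset.mem_filter] at hwN; exact hwN.2
        have hrwL : ¬ r w L = true := fun ht => hwS ((hmemS w).mpr ⟨hadjwL, ht⟩)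
        have hrLw : r L w = true := by
          by_contra hne
          exact hrwL ((h2 w L hadjwL).mpr (by simpa using hne))
        have hruL : r u L = true := ((hmemS u).mp huS).2
        have hrtr : Relation.ReflTransGen (fun a b => r a b = true) w u :=
          Relation.ReflTransGen.mono (fun a b h => ((hrlift a b).mp h).2.2) _ _ hrt
        exact h3 L (Relation.TransGen.head hrLw (Relation.TransGen.tail' hrtr hruL))
    refine ⟨r', some u, hr', (mem_OptsL G).mpr (Or.inr ⟨u, huN, rfl⟩), ?_⟩
    rw [pm]
    simp only [Sop, Option.elim]
    rw [← hSD, hext]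

end Surj

section NonClique
variable {m : ℕ} (G : SimpleGraph (Fin (m+1)))

lemma extO_S_inj (r' : Fin m → Fin m → Bool) (S1 S2 : Finset (Fin (m+1)))
    (h1 : S1 ⊆ NL G) (h2 : S2 ⊆ NL G) (heq : extO G r' S1 = extO G r' S2) : S1 = S2 := by
  ext u
  have key : ∀ (Sa Sb : Finset (Fin (m+1))), Sa ⊆ NL G →
      extO G r' Sa = extO G r' Sb → u ∈ Sa → u ∈ Sb := by
    intro Sa Sb ha hab hu
    have huN : u ∈ NL G := ha hu
    have huadj : G.Adj u (Fin.last m) := (Finset.mem_filter.mp huN).2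
    have huL : u ≠ Fin.last m := huadj.ne
    have e1 : extO G r' Sa u (Fin.last m) = true := (extO_in G r' Sa huL).mpr ⟨huadj, hu⟩
    rw [hab] at e1
    exact ((extO_in G r' Sb huL).mp e1).2
  exact ⟨key S1 S2 h1 heq, key S2 S1 h2 heq.symm⟩

/-- key function for the special orientation -/
noncomputable def kap (j k : Fin (m+1)) (x : Fin (m+1)) : ℕ :=
  if x = j then m+1 else if x = k then m+2 else x.val

noncomputable def rstar (j k : Fin (m+1)) : Fin m → Fin m → Bool :=
  fun a b => decide ((Gres G).Adj a b ∧ kap j k a.castSucc < kap j k b.castSucc)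

lemma kap_inj {j k : Fin (m+1)} {a b : Fin (m+1)} (ha : a ≠ Fin.last m) (hb : b ≠ Fin.last m)
    (h : kap j k a = kap j k b) : a = b := by
  have hav : a.val < m := Fin.val_lt_last ha
  have hbv : b.val < m := Fin.val_lt_last hb
  rw [kap, kap] at h
  split_ifs at h <;> first | (exact Fin.ext h) | omega | simp_all

lemma rstar_step {j k : Fin (m+1)} {a b : Fin m} (h : rstar G j k a b = true) :
    (Gres G).Adj a b ∧ kap j k a.castSucc < kap j k b.castSucc := by
  rw [rstar, decide_eq_true_iff] at h
  exact h

lemma rstar_isAO (j k : Fin (m+1)) : IsAcyclicOrientation (Gres G) (rstar G j k) := by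
  refine ⟨?_, ?_, ?_⟩
  · intro u v h
    exact (rstar_step G h).1
  · intro u v hadj
    rw [rstar, rstar, decide_eq_true_iff, decide_eq_true_iff]
    have hne : kap j k u.castSucc ≠ kap j k v.castSucc := by
      intro he
      exact hadj.ne (Fin.castSucc_injective m (kap_inj
        (Fin.castSucc_lt_last u).ne (Fin.castSucc_lt_last v).ne he))
    constructor
    · rintro ⟨_, hlt⟩ ⟨_, hlt'⟩
      omega
    · intro h
      refine ⟨hadj, ?_⟩
      rcases lt_trichotomy (kap j k u.castSucc) (kap j k v.castSucc) with hl | hl | hl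
      · exact hl
      · exact absurd hl hne
      · exact absurd ⟨hadj.symm, hl⟩ h
  · intro v htg
    have mono : ∀ a b, Relation.TransGen (fun a b => rstar G j k a b = true) a b →
        kap j k a.castSucc < kap j k b.castSucc := by
      intro a b h
      induction h with
      | single h => exact (rstar_step G h).2
      | tail _ h ih => exact ih.trans (rstar_step G h).2
    exact lt_irrefl _ (mono v v htg)

variable {j k : Fin (m+1)}

lemma rlift_rstar {a b : Fin (m+1)} (h : Rlift (rstar G j k) a b) :
    G.Adj a b ∧ kap j k a < kap j k b := by
  obtain ⟨ha, hb, h⟩ := h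
  obtain ⟨hadj, hlt⟩ := rstar_step G h
  rw [gres_adj, Fin.castSucc_castPred, Fin.castSucc_castPred] at hadj
  rw [Fin.castSucc_castPred, Fin.castSucc_castPred] at hlt
  exact ⟨hadj, hlt⟩

lemma kap_j : kap j k j = m+1 := by rw [kap]; simp

lemma kap_k (hjk : j ≠ k) : kap j k k = m+2 := by
  rw [kap]
  rw [if_neg (Ne.symm hjk), if_pos rfl]

lemma eq_k_of_kap_gt {x : Fin (m+1)} (h : m+1 < kap j k x) : x = k := by
  have hx := x.isLt
  rw [kap] at h
  split_ifs at h with h1 h2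
  · omega
  · exact h2
  · omega

lemma rtg_from_k (hjk : j ≠ k) :
    ∀ x, Relation.ReflTransGen (Rlift (rstar G j k)) k x → x = k := by
  intro x h
  induction h with
  | refl => rfl
  | @tail b c hr hstep ih =>
    rw [ih] at hstep
    obtain ⟨_, hlt⟩ := rlift_rstar G hstep
    rw [kap_k hjk] at hlt
    have hck : c = k := eq_k_of_kap_gt (j := j) (by omega)
    rw [hck, kap_k hjk] at hlt
    omega

lemma rtg_from_j (hjk : j ≠ k) (hnadj : ¬ G.Adj j k) :
    ∀ x, Relation.ReflTransGen (Rlift (rstar G j k)) j x → x = j := by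
  intro x h
  induction h with
  | refl => rfl
  | @tail b c hr hstep ih =>
    rw [ih] at hstep
    obtain ⟨hadj, hlt⟩ := rlift_rstar G hstep
    rw [kap_j] at hlt
    have hc : c = k := eq_k_of_kap_gt hlt
    rw [hc] at hadj
    exact absurd hadj hnadj

end NonClique

section Assemble
variable {m : ℕ} (G : SimpleGraph (Fin (m+1)))

noncomputable def domAO : Finset ((Fin m → Fin m → Bool) × Option (Fin (m+1))) :=
  (Finset.univ.filter (fun r' => IsAcyclicOrientation (Gres G) r')) ×ˢ OptsL G

lemma card_domAO : (domAO G).card = ao (Gres G) * (1 + (NL G).card) := by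
  rw [domAO, Finset.card_product, card_OptsL, ao]

lemma image_pm_subset :
    (domAO G).image (pm G) ⊆ Finset.univ.filter (fun r => IsAcyclicOrientation G r) := by
  intro r hr
  rw [Finset.mem_image] at hr
  obtain ⟨p, hp, rfl⟩ := hr
  rw [domAO, Finset.mem_product] at hp
  have h1 := (Finset.mem_filter.mp hp.1).2
  rw [Finset.mem_filter]
  refine ⟨Finset.mem_univ _, ?_⟩
  obtain ⟨p1, p2⟩ := p
  exact pm_maps G h1

lemma card_image_pm : ((domAO G).image (pm G)).card = ao (Gres G) * (1 + (NL G).card) := by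
  rw [← card_domAO]
  apply Finset.card_image_of_injOn
  intro p1 hp1 p2 hp2 heq
  rw [Finset.mem_coe, domAO, Finset.mem_product] at hp1 hp2
  obtain ⟨q1, o1⟩ := p1
  obtain ⟨q2, o2⟩ := p2
  obtain ⟨h1, h2⟩ := pm_inj G (Finset.mem_filter.mp hp1.1).2 hp1.2 hp2.2 heq
  exact Prod.ext h1 h2

lemma ao_lower : ao (Gres G) * (1 + (NL G).card) ≤ ao G := by
  rw [← card_image_pm, ao]
  exact Finset.card_le_card (image_pm_subset G)

lemma ao_eq_of_cl (hcl : Cl G) : ao G = ao (Gres G) * (1 + (NL G).card) := by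
  rw [← card_image_pm, ao]
  congr 1
  refine Finset.Subset.antisymm ?_ (image_pm_subset G)
  intro r hr
  obtain ⟨r', o, hr', ho, heq⟩ := pm_surj G hcl (Finset.mem_filter.mp hr).2
  rw [Finset.mem_image]
  refine ⟨(r', o), ?_, heq⟩
  rw [domAO, Finset.mem_product]
  exact ⟨Finset.mem_filter.mpr ⟨Finset.mem_univ _, hr'⟩, ho⟩

lemma ao_lower_strict (hncl : ¬ Cl G) : ao (Gres G) * (1 + (NL G).card) + 1 ≤ ao G := by
  rw [Cl] at hncl
  push_neg at hncl
  obtain ⟨j, k, hjk, hjL, hkL, hnadj⟩ := hncl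
  have hjkne : j ≠ k := ne_of_lt hjk
  have hjN : j ∈ NL G := Finset.mem_filter.mpr ⟨Finset.mem_univ _, hjL⟩
  have hkN : k ∈ NL G := Finset.mem_filter.mpr ⟨Finset.mem_univ _, hkL⟩
  set Sstar := (DD G (rstar G j k) j) ∪ (DD G (rstar G j k) k) with hSs
  have hSsub : Sstar ⊆ NL G := by
    rw [hSs]
    intro x hx
    rcases Finset.mem_union.mp hx with h | h
    · exact (Finset.mem_filter.mp h).1
    · exact (Finset.mem_filter.mp h).1
  have hgood : Good G (rstar G j k) Sstar := by
    intro y x hy hx hyx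
    have hyN : y ∈ NL G := Finset.mem_filter.mpr ⟨Finset.mem_univ _, hy⟩
    rw [hSs, Finset.mem_union] at hx ⊢
    rcases hx with h | h
    · exact Or.inl (Finset.mem_filter.mpr ⟨hyN, hyx.trans (Finset.mem_filter.mp h).2⟩)
    · exact Or.inr (Finset.mem_filter.mpr ⟨hyN, hyx.trans (Finset.mem_filter.mp h).2⟩)
  set rX := extO G (rstar G j k) Sstar with hrXdef
  have hrXAO : IsAcyclicOrientation G rX := extO_isAO G _ _ (rstar_isAO G j k) hSsub hgood
  have hnotmem : rX ∉ (domAO G).image (pm G) := by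
    intro hmem
    rw [Finset.mem_image] at hmem
    obtain ⟨⟨r'', o⟩, hp, heq⟩ := hmem
    rw [domAO, Finset.mem_product] at hp
    have hreq : r'' = rstar G j k := by
      funext a b
      have h := congrFun (congrFun heq a.castSucc) b.castSucc
      rw [pm, hrXdef, extO_restrict, extO_restrict] at h
      exact h
    rw [hreq] at heq
    have hSe : Sop G (rstar G j k) o = Sstar :=
      extO_S_inj G _ _ _ (Sop_subset G _ o) hSsub heq
    have hjS : j ∈ Sstar := by
      rw [hSs]
      exact Finset.mem_union_left _
        (Finset.mem_filter.mpr ⟨hjN, Relation.ReflTransGen.refl⟩)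
    have hkS : k ∈ Sstar := by
      rw [hSs]
      exact Finset.mem_union_right _
        (Finset.mem_filter.mpr ⟨hkN, Relation.ReflTransGen.refl⟩)
    rcases (mem_OptsL G).mp hp.2 with rfl | ⟨u, huN, rfl⟩
    · rw [← hSe] at hjS
      simp [Sop] at hjS
    · rw [← hSe] at hjS hkS
      simp only [Sop, Option.elim] at hjS hkS
      have hju : Relation.ReflTransGen (Rlift (rstar G j k)) j u :=
        (Finset.mem_filter.mp hjS).2
      have hku : Relation.ReflTransGen (Rlift (rstar G j k)) k u :=
        (Finset.mem_filter.mp hkS).2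
      have h1 : u = j := rtg_from_j G hjkne hnadj u hju
      have h2 : u = k := rtg_from_k G hjkne u hku
      exact hjkne (h1 ▸ h2)
  have hsub2 : insert rX ((domAO G).image (pm G)) ⊆
      Finset.univ.filter (fun r => IsAcyclicOrientation G r) := by
    intro r hr
    rcases Finset.mem_insert.mp hr with rfl | hr
    · exact Finset.mem_filter.mpr ⟨Finset.mem_univ _, hrXAO⟩
    · exact image_pm_subset G hr
  have := Finset.card_le_card hsub2
  rw [Finset.card_insert_of_notMem hnotmem, card_image_pm] at this
  exact this

end Assemble

lemma ao_zero (G : SimpleGraph (Fin 0)) : ao G = 1 := by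
  rw [ao]
  have h : (Finset.univ.filter (fun r : Fin 0 → Fin 0 → Bool => IsAcyclicOrientation G r))
      = Finset.univ := by
    refine Finset.filter_true_of_mem ?_
    intro r _
    exact ⟨fun u => u.elim0, fun u => u.elim0, fun v => v.elim0⟩
  rw [h, Finset.card_univ]
  simp

lemma pprod_zero (G : SimpleGraph (Fin 0)) : Pprod G = 1 := by
  rw [Pprod]; simp

lemma key : ∀ (k : ℕ) (G : SimpleGraph (Fin k)),
    Pprod G ≤ ao G ∧ (Pprod G = ao G ↔ IsPEO G) := by
  intro k
  induction k with
  | zero =>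
    intro G
    rw [ao_zero, pprod_zero]
    simp only [le_refl, true_and, true_iff]
    intro i
    exact i.elim0
  | succ m ih =>
    intro G
    obtain ⟨hle', hiff'⟩ := ih (Gres G)
    have hP : Pprod G = (1 + (NL G).card) * Pprod (Gres G) := pprod_split G
    have hpos : 0 < 1 + (NL G).card := by omega
    by_cases hcl : Cl G
    · have heq := ao_eq_of_cl G hcl
      have hle2 : Pprod G ≤ ao G := by
        rw [hP, heq, mul_comm (ao (Gres G)) _]
        exact Nat.mul_le_mul_left _ hle'
      refine ⟨hle2, ?_⟩
      rw [peo_iff]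
      constructor
      · intro h
        rw [hP, heq, mul_comm (ao (Gres G)) _] at h
        exact ⟨hcl, hiff'.mp (Nat.eq_of_mul_eq_mul_left hpos h)⟩
      · rintro ⟨_, hpeo'⟩
        rw [hP, heq, mul_comm (ao (Gres G)) _, hiff'.mpr hpeo']
    · have hstrict := ao_lower_strict G hcl
      have hlt : Pprod G < ao G := by
        have h1 : Pprod G ≤ ao (Gres G) * (1 + (NL G).card) := by
          rw [hP, mul_comm]
          exact Nat.mul_le_mul_right _ hle'
        omega
      refine ⟨hlt.le, ?_⟩
      constructor
      · intro h
        exact absurd h hlt.ne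
      · intro hpeo
        exact absurd ((peo_iff G).mp hpeo).1 hcl

end ISFP


theorem stmt_6 {n : ℕ} (G : SimpleGraph (Fin n)) :
    isfTotal G ≤ ao G ∧ (isfTotal G = ao G ↔ IsPEO G) := by
  obtain ⟨h1, h2⟩ := ISFP.key n G
  rw [ISFP.isfTotal_eq_Pprod]
  exact ⟨h1, h2⟩
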